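/- Let 0 < μ_2 < μ_1 < 1. There exists a unique μ* ∈ (μ_2, μ_1) such that kl(μ_1, μ*) = kl(μ_2, μ*). Moreover, sup_{α ∈ [0,1]} I_α(μ_1, μ_2) = kl(μ_1, μ*) = kl(μ_2, μ*), and the supremum is attained at the unique α* ∈ (0,1) satisfying α*·μ_1 + (1−α*)·μ_2 = μ* (this common value is the 'reversed' Chernoff information d_*(μ_1,μ_2)). -/

import Mathlib

/-- Bernoulli Kullback–Leibler divergence. -/
noncomputable def kl (x y : ℝ) : ℝ :=
  x * Real.log (x / y) + (1 - x) * Real.log ((1 - x) / (1 - y))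

/-- The parameterized Jensen–Shannon-type divergence `I_α`. -/
noncomputable def Ialpha (α x y : ℝ) : ℝ :=
  α * kl x (α * x + (1 - α) * y) + (1 - α) * kl y (α * x + (1 - α) * y)

noncomputable def negent (t : ℝ) : ℝ := t * Real.log t + (1 - t) * Real.log (1 - t)

lemma kl_self {x : ℝ} (hx : x ≠ 0) (hx1 : x ≠ 1) : kl x x = 0 := by
  have : (1:ℝ) - x ≠ 0 := fun h => hx1 (by linarith)
  unfold kl
  rw [div_self hx, div_self this, Real.log_one]
  ring

lemma kl_pos {x y : ℝ} (hx0 : 0 < x) (hx1 : x < 1) (hy0 : 0 < y) (hy1 : y < 1)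
    (hxy : x ≠ y) : 0 < kl x y := by
  have hx1' : (0:ℝ) < 1 - x := by linarith
  have hy1' : (0:ℝ) < 1 - y := by linarith
  have h1 : Real.log (y / x) < y / x - 1 := by
    apply Real.log_lt_sub_one_of_pos (by positivity)
    intro h
    exact hxy (by field_simp at h; linarith)
  have h2 : Real.log ((1 - y) / (1 - x)) < (1 - y) / (1 - x) - 1 := by
    apply Real.log_lt_sub_one_of_pos (by positivity)
    intro h
    exact hxy (by field_simp at h; linarith)
  have e1 : Real.log (x / y) = -Real.log (y / x) := by
    rw [Real.log_div hx0.ne' hy0.ne', Real.log_div hy0.ne' hx0.ne']; ring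
  have e2 : Real.log ((1 - x) / (1 - y)) = -Real.log ((1 - y) / (1 - x)) := by
    rw [Real.log_div hx1'.ne' hy1'.ne', Real.log_div hy1'.ne' hx1'.ne']; ring
  have m1 : x * Real.log (y / x) < x * (y / x - 1) := by
    exact mul_lt_mul_of_pos_left h1 hx0
  have m2 : (1 - x) * Real.log ((1 - y) / (1 - x)) < (1 - x) * ((1 - y) / (1 - x) - 1) := by
    exact mul_lt_mul_of_pos_left h2 hx1'
  have c1 : x * (y / x - 1) = y - x := by field_simp
  have c2 : (1 - x) * ((1 - y) / (1 - x) - 1) = x - y := by field_simp; ring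
  unfold kl
  rw [e1, e2]
  nlinarith

lemma kl_sub {μ1 μ2 m : ℝ} (h10 : 0 < μ1) (h11 : μ1 < 1) (h20 : 0 < μ2) (h21 : μ2 < 1)
    (hm0 : 0 < m) (hm1 : m < 1) :
    kl μ1 m - kl μ2 m
      = (negent μ1 - negent μ2) - (μ1 - μ2) * (Real.log m - Real.log (1 - m)) := by
  have hm1' : (0:ℝ) < 1 - m := by linarith
  have h11' : (0:ℝ) < 1 - μ1 := by linarith
  have h21' : (0:ℝ) < 1 - μ2 := by linarith
  unfold kl negent
  rw [Real.log_div h10.ne' hm0.ne', Real.log_div h20.ne' hm0.ne',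
    Real.log_div h11'.ne' hm1'.ne', Real.log_div h21'.ne' hm1'.ne']
  ring

lemma negent_hasDerivAt {t : ℝ} (h0 : 0 < t) (h1 : t < 1) :
    HasDerivAt negent (Real.log t - Real.log (1 - t)) t := by
  have h1' : (0:ℝ) < 1 - t := by linarith
  have ha : HasDerivAt (fun x : ℝ => x * Real.log x) (1 * Real.log t + t * t⁻¹) t :=
    (hasDerivAt_id t).mul (Real.hasDerivAt_log h0.ne')
  have hb : HasDerivAt (fun x : ℝ => 1 - x) (-1) t := by
    simpa using (hasDerivAt_id t).const_sub 1
  have hc : HasDerivAt (fun x : ℝ => Real.log (1 - x)) ((1 - t)⁻¹ * -1) t :=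
    (Real.hasDerivAt_log h1'.ne').comp t hb
  have hd : HasDerivAt (fun x : ℝ => (1 - x) * Real.log (1 - x))
      (-1 * Real.log (1 - t) + (1 - t) * ((1 - t)⁻¹ * -1)) t := hb.mul hc
  have := ha.add hd
  have heq : 1 * Real.log t + t * t⁻¹ + (-1 * Real.log (1 - t) + (1 - t) * ((1 - t)⁻¹ * -1))
      = Real.log t - Real.log (1 - t) := by
    field_simp
    ring
  rw [heq] at this
  exact this

lemma Ialpha_eq {μ1 μ2 α : ℝ} (h10 : 0 < μ1) (h11 : μ1 < 1) (h20 : 0 < μ2) (h21 : μ2 < 1)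
    (hm0 : 0 < α * μ1 + (1 - α) * μ2) (hm1 : α * μ1 + (1 - α) * μ2 < 1) :
    Ialpha α μ1 μ2
      = α * negent μ1 + (1 - α) * negent μ2 - negent (α * μ1 + (1 - α) * μ2) := by
  have h11' : (0:ℝ) < 1 - μ1 := by linarith
  have h21' : (0:ℝ) < 1 - μ2 := by linarith
  have hm1' : (0:ℝ) < 1 - (α * μ1 + (1 - α) * μ2) := by linarith
  unfold Ialpha kl negent
  rw [Real.log_div h10.ne' hm0.ne', Real.log_div h20.ne' hm0.ne',
    Real.log_div h11'.ne' hm1'.ne', Real.log_div h21'.ne' hm1'.ne']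
  ring

/-- there is a unique `μ* ∈ (μ₂,μ₁)` with `kl(μ₁,μ*) = kl(μ₂,μ*)`;
the supremum of `α ↦ I_α(μ₁,μ₂)` over `[0,1]` equals this common value (the
'reversed' Chernoff information), and it is attained at the unique `α* ∈ (0,1)`
with `α*μ₁ + (1−α*)μ₂ = μ*`. -/
theorem chernoff_information (μ1 μ2 : ℝ) (h0 : 0 < μ2) (h21 : μ2 < μ1) (h1 : μ1 < 1) :
    ∃ mustar ∈ Set.Ioo μ2 μ1,
      kl μ1 mustar = kl μ2 mustar ∧
      (∀ m ∈ Set.Ioo μ2 μ1, kl μ1 m = kl μ2 m → m = mustar) ∧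
      ∃ astar ∈ Set.Ioo (0 : ℝ) 1,
        astar * μ1 + (1 - astar) * μ2 = mustar ∧
        IsGreatest ((fun α => Ialpha α μ1 μ2) '' Set.Icc 0 1) (kl μ1 mustar) ∧
        Ialpha astar μ1 μ2 = kl μ1 mustar ∧
        ∀ α ∈ Set.Icc (0 : ℝ) 1, Ialpha α μ1 μ2 = kl μ1 mustar → α = astar := by
  have h10 : 0 < μ1 := lt_trans h0 h21
  have h2lt1 : μ2 < 1 := lt_trans h21 h1
  -- the function F m = kl μ1 m - kl μ2 m as explicit formula
  set C : ℝ := negent μ1 - negent μ2 with hC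
  set F : ℝ → ℝ := fun m => C - (μ1 - μ2) * (Real.log m - Real.log (1 - m)) with hFdef
  have hFeq : ∀ m : ℝ, 0 < m → m < 1 → kl μ1 m - kl μ2 m = F m := by
    intro m hm0 hm1
    exact kl_sub h10 h1 h0 h2lt1 hm0 hm1
  -- F is continuous on [μ2, μ1]
  have hFcont : ContinuousOn F (Set.Icc μ2 μ1) := by
    apply ContinuousOn.sub continuousOn_const
    apply ContinuousOn.mul continuousOn_const
    apply ContinuousOn.sub
    · exact Real.continuousOn_log.comp continuousOn_id fun x hx => by
        simp only [Set.mem_Icc] at hx; simp; intro h; linarith [hx.1]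
    · apply Real.continuousOn_log.comp (continuousOn_const.sub continuousOn_id)
      intro x hx
      simp only [Set.mem_Icc] at hx; simp; intro h; linarith [hx.2]
  have hF2 : F μ2 = kl μ1 μ2 := by
    rw [← hFeq μ2 h0 h2lt1, kl_self h0.ne' h2lt1.ne]; ring
  have hF1 : F μ1 = -kl μ2 μ1 := by
    rw [← hFeq μ1 h10 h1, kl_self h10.ne' h1.ne]; ring
  have hF2pos : 0 < F μ2 := by rw [hF2]; exact kl_pos h10 h1 h0 h2lt1 (ne_of_gt h21)
  have hF1neg : F μ1 < 0 := by
    rw [hF1]; simp; exact kl_pos h0 h2lt1 h10 h1 (ne_of_lt h21)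
  obtain ⟨mustar, hms, hFms⟩ :=
    intermediate_value_Ioo' (le_of_lt h21) hFcont (Set.mem_Ioo.mpr ⟨hF1neg, hF2pos⟩)
  have hms2 : μ2 < mustar := hms.1
  have hms1 : mustar < μ1 := hms.2
  have hms0 : 0 < mustar := lt_trans h0 hms2
  have hmslt1 : mustar < 1 := lt_trans hms1 h1
  -- strict monotonicity of g m = log m - log (1-m) gives F strictly decreasing, hence uniqueness
  have hFanti : ∀ a b : ℝ, 0 < a → a < b → b < 1 → F b < F a := by
    intro a b ha0 hab hb1
    have hla : Real.log a < Real.log b := Real.log_lt_log ha0 hab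
    have hlb : Real.log (1 - b) < Real.log (1 - a) := Real.log_lt_log (by linarith) (by linarith)
    have hD : 0 < μ1 - μ2 := by linarith
    simp only [hFdef]
    nlinarith
  have hkleq : kl μ1 mustar = kl μ2 mustar := by
    have := hFeq mustar hms0 hmslt1
    rw [hFms] at this
    linarith
  have huniq : ∀ m ∈ Set.Ioo μ2 μ1, kl μ1 m = kl μ2 m → m = mustar := by
    intro m hm hklm
    have hm0 : 0 < m := lt_trans h0 hm.1
    have hm1 : m < 1 := lt_trans hm.2 h1
    have hFm : F m = 0 := by rw [← hFeq m hm0 hm1, hklm]; ring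
    rcases lt_trichotomy m mustar with h | h | h
    · exfalso; have := hFanti m mustar hm0 h hmslt1; rw [hFm, hFms] at this; linarith
    · exact h
    · exfalso; have := hFanti mustar m hms0 h hm1; rw [hFm, hFms] at this; linarith
  -- astar
  set astar : ℝ := (mustar - μ2) / (μ1 - μ2) with hadef
  have hD : 0 < μ1 - μ2 := by linarith
  have hastar : astar * μ1 + (1 - astar) * μ2 = mustar := by
    rw [hadef]; field_simp; ring
  have ha0 : 0 < astar := by
    apply div_pos (by linarith) hD
  have ha1 : astar < 1 := by
    rw [hadef, div_lt_one hD]; linarith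
  -- the function ψ, rewriting of Ialpha
  set ψ : ℝ → ℝ := fun α => α * negent μ1 + (1 - α) * negent μ2
      - negent (α * μ1 + (1 - α) * μ2) with hψdef
  have hmmem : ∀ α : ℝ, 0 ≤ α → α ≤ 1 → 0 < α * μ1 + (1 - α) * μ2 ∧ α * μ1 + (1 - α) * μ2 < 1 := by
    intro α hα0 hα1
    constructor <;> nlinarith
  have hIψ : ∀ α : ℝ, 0 ≤ α → α ≤ 1 → Ialpha α μ1 μ2 = ψ α := by
    intro α hα0 hα1
    obtain ⟨hm0, hm1⟩ := hmmem α hα0 hα1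
    exact Ialpha_eq h10 h1 h0 h2lt1 hm0 hm1
  -- derivative of ψ
  have hψderiv : ∀ α : ℝ, 0 < α * μ1 + (1 - α) * μ2 → α * μ1 + (1 - α) * μ2 < 1 →
      HasDerivAt ψ (F (α * μ1 + (1 - α) * μ2)) α := by
    intro α hm0 hm1
    have hlin : HasDerivAt (fun a : ℝ => a * μ1 + (1 - a) * μ2) (μ1 - μ2) α := by
      have : HasDerivAt (fun a : ℝ => a * μ1 + (1 - a) * μ2) (1 * μ1 + (-1) * μ2) α := by
        apply HasDerivAt.add
        · exact (hasDerivAt_id α).mul_const μ1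
        · exact (((hasDerivAt_id α).const_sub 1)).mul_const μ2
      convert this using 1; ring
    have hcomp := (negent_hasDerivAt hm0 hm1).comp α hlin
    have haff : HasDerivAt (fun a : ℝ => a * negent μ1 + (1 - a) * negent μ2)
        (negent μ1 - negent μ2) α := by
      have : HasDerivAt (fun a : ℝ => a * negent μ1 + (1 - a) * negent μ2)
          (1 * negent μ1 + (-1) * negent μ2) α := by
        apply HasDerivAt.add
        · exact (hasDerivAt_id α).mul_const (negent μ1)
        · exact (((hasDerivAt_id α).const_sub 1)).mul_const (negent μ2)
      convert this using 1; ring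
    have := haff.sub hcomp
    refine this.congr_deriv ?_
    simp only [hFdef, hC]
    ring
  -- F (m α) > 0 for α < astar, < 0 for α > astar (α in [0,1])
  have hmast : ∀ α : ℝ, α * μ1 + (1 - α) * μ2 - mustar = (α - astar) * (μ1 - μ2) := by
    intro α
    have : astar * (μ1 - μ2) = mustar - μ2 := by
      rw [hadef]; field_simp
    nlinarith [this]
  have hderivpos : ∀ α ∈ Set.Ioo (0:ℝ) astar, 0 < deriv ψ α := by
    intro α hα
    have hα1 : α ≤ 1 := le_of_lt (lt_trans hα.2 ha1)
    obtain ⟨hm0, hm1⟩ := hmmem α (le_of_lt hα.1) hα1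
    rw [(hψderiv α hm0 hm1).deriv]
    have hlt : α * μ1 + (1 - α) * μ2 < mustar := by nlinarith [hmast α, hα.2]
    have := hFanti (α * μ1 + (1 - α) * μ2) mustar hm0 hlt hmslt1
    rw [hFms] at this; linarith
  have hderivneg : ∀ α ∈ Set.Ioo astar (1:ℝ), deriv ψ α < 0 := by
    intro α hα
    have hα0 : 0 ≤ α := le_of_lt (lt_trans ha0 hα.1)
    obtain ⟨hm0, hm1⟩ := hmmem α hα0 (le_of_lt hα.2)
    rw [(hψderiv α hm0 hm1).deriv]
    have hgt : mustar < α * μ1 + (1 - α) * μ2 := by nlinarith [hmast α, hα.1]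
    have := hFanti mustar (α * μ1 + (1 - α) * μ2) hms0 hgt hm1
    rw [hFms] at this; linarith
  have hψcont : ContinuousOn ψ (Set.Icc 0 1) := by
    intro α hα
    obtain ⟨hm0, hm1⟩ := hmmem α hα.1 hα.2
    exact ((hψderiv α hm0 hm1).continuousAt).continuousWithinAt
  have hmono : StrictMonoOn ψ (Set.Icc 0 astar) := by
    apply strictMonoOn_of_deriv_pos (convex_Icc 0 astar)
    · exact hψcont.mono (Set.Icc_subset_Icc le_rfl (le_of_lt ha1))
    · intro x hx
      rw [interior_Icc] at hx
      exact hderivpos x hx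
  have hanti : StrictAntiOn ψ (Set.Icc astar 1) := by
    apply strictAntiOn_of_deriv_neg (convex_Icc astar 1)
    · exact hψcont.mono (Set.Icc_subset_Icc (le_of_lt ha0) le_rfl)
    · intro x hx
      rw [interior_Icc] at hx
      exact hderivneg x hx
  -- value at astar
  have hIastar : Ialpha astar μ1 μ2 = kl μ1 mustar := by
    unfold Ialpha
    rw [hastar, hkleq]
    ring
  have hψle : ∀ α ∈ Set.Icc (0:ℝ) 1, α ≠ astar → ψ α < ψ astar := by
    intro α hα hne
    rcases lt_or_gt_of_ne hne with h | h
    · exact hmono ⟨hα.1, le_of_lt h⟩ ⟨hα.1.trans (le_of_lt h), le_rfl⟩ h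
    · exact hanti ⟨le_rfl, ha1.le⟩ ⟨(le_of_lt h), hα.2⟩ h
  have hub : ∀ α ∈ Set.Icc (0:ℝ) 1, Ialpha α μ1 μ2 ≤ kl μ1 mustar := by
    intro α hα
    rw [hIψ α hα.1 hα.2]
    have h3 : ψ astar = kl μ1 mustar := by rw [← hIψ astar ha0.le ha1.le, hIastar]
    by_cases h : α = astar
    · subst h; rw [h3]
    · have h2 := hψle α hα h
      linarith
  refine ⟨mustar, hms, hkleq, huniq, astar, ⟨ha0, ha1⟩, hastar, ⟨⟨astar, ⟨le_of_lt ha0, le_of_lt ha1⟩, hIastar⟩, ?_⟩, hIastar, ?_⟩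
  · rintro y ⟨α, hα, rfl⟩
    exact hub α hα
  · intro α hα hI
    by_contra hne
    have := hψle α hα hne
    rw [← hIψ α hα.1 hα.2, ← hIψ astar (le_of_lt ha0) (le_of_lt ha1), hI, hIastar] at this
    exact lt_irrefl _ this
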